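/- In the Banach–Mazur game on Cantor space played with basic cylinder sets, Player 2 has a winning strategy for the target set A consisting of all sequences for which a fixed forecasting system F is high-low calibrated: the strategy of extending the current finite string bit by bit, always playing the bit 1 when the forecast is < 1/2 and 0 otherwise, until the mean discrepancy on one of the two selected subsequences has absolute value ≥ 1/4, defeats every play of Player 1. -/

import Mathlib

open Filter Topology

/-- The forecast probability on day `k` for data sequence `a`:
`F` applied to the first `k` bits of `a`. -/
noncomputable def fc (F : List Bool → ℝ) (a : ℕ → Bool) (k : ℕ) : ℝ :=
  F (List.ofFn (fun i : Fin k => a i))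

/-- The discrepancy on day `k`: `a_k - π_k`. -/
noncomputable def disc (F : List Bool → ℝ) (a : ℕ → Bool) (k : ℕ) : ℝ :=
  (if a k then 1 else 0) - fc F a k

open Classical in
/-- Mean discrepancy over the days `k < n` satisfying `P`. -/
noncomputable def avgDisc (F : List Bool → ℝ) (a : ℕ → Bool) (P : ℕ → Prop) (n : ℕ) : ℝ :=
  (∑ k ∈ (Finset.range n).filter P, disc F a k) /
    (((Finset.range n).filter P).card : ℝ)

/-- `F` is high-low calibrated for `a`: for each of the two groups of days
(forecast `≥ 1/2`, forecast `< 1/2`), either the group is finite or the mean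
discrepancy over that group among the first `n` days tends to `0`. -/
def HighLowCalibrated (F : List Bool → ℝ) (a : ℕ → Bool) : Prop :=
  ({k | 1/2 ≤ fc F a k}.Finite ∨
      Tendsto (avgDisc F a (fun k => 1/2 ≤ fc F a k)) atTop (𝓝 0)) ∧
  ({k | fc F a k < 1/2}.Finite ∨
      Tendsto (avgDisc F a (fun k => fc F a k < 1/2)) atTop (𝓝 0))

open Classical in
/-- The adversarial sequence against `F`: `a_k = 1` iff the forecast is `< 1/2`. -/
noncomputable def adv (F : List Bool → ℝ) : ℕ → Bool
  | k => if F (List.ofFn (fun i : Fin k => adv F i)) < 1/2 then true else false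

/-- Forecast along a finite string `v` on day `k`: `F` applied to the first `k` bits. -/
noncomputable def fcStr (F : List Bool → ℝ) (v : List Bool) (k : ℕ) : ℝ :=
  F (v.take k)

/-- Discrepancy along a finite string `v` on day `k`. -/
noncomputable def discStr (F : List Bool → ℝ) (v : List Bool) (k : ℕ) : ℝ :=
  (if v.getD k false then 1 else 0) - fcStr F v k

open Classical in
/-- Mean discrepancy along a finite string `v` over the days `k < |v|` satisfying `P`. -/
noncomputable def meanDiscStr (F : List Bool → ℝ) (v : List Bool) (P : ℕ → Prop) : ℝ :=
  (∑ k ∈ (Finset.range v.length).filter P, discStr F v k) /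
    (((Finset.range v.length).filter P).card : ℝ)

/-- The position after round `n` of the Banach–Mazur game on Cantor space in which
Player 2 uses strategy `σ` (responding to the current finite string by appending
`σ` of it) and Player 1's successive moves are the appended strings `f 0, f 1, …`
(Player 1 moves first). -/
def posSeq (σ : List Bool → List Bool) (f : ℕ → List Bool) : ℕ → List Bool
  | 0 => f 0
  | n + 1 => (posSeq σ f n ++ σ (posSeq σ f n)) ++ f (n + 1)

/-- `a` is an infinite binary sequence compatible with every position of the play,
i.e. `a` lies in the intersection of the chosen cylinder sets. -/
def IsLimit (σ : List Bool → List Bool) (f : ℕ → List Bool) (a : ℕ → Bool) : Prop :=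
  ∀ n k, k < (posSeq σ f n).length → (posSeq σ f n).getD k false = a k

/-- append adversarial bits one at a time -/
noncomputable def ext (F : List Bool → ℝ) (p : List Bool) : ℕ → List Bool
  | 0 => p
  | n + 1 => ext F p n ++ [decide (F (ext F p n) < 1/2)]

lemma ext_length (F : List Bool → ℝ) (p : List Bool) (n : ℕ) :
    (ext F p n).length = p.length + n := by
  induction n with
  | zero => rfl
  | succ n ih => simp [ext, ih]; ring

lemma ext_prefix (F : List Bool → ℝ) (p : List Bool) {n m : ℕ} (h : n ≤ m) :
    ext F p n <+: ext F p m := by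
  induction m with
  | zero => simpa using (Nat.le_zero.mp h) ▸ List.prefix_refl _
  | succ m ih =>
    rcases Nat.lt_or_ge n (m+1) with h' | h'
    · exact (ih (Nat.lt_succ_iff.mp h')).trans (by simp [ext])
    · have : n = m + 1 := le_antisymm h h'
      subst this; exact List.prefix_refl _

lemma prefix_take {u w : List Bool} (h : u <+: w) {k : ℕ} (hk : k ≤ u.length) :
    w.take k = u.take k := by
  have h1 : w.take u.length = u := by
    obtain ⟨t, rfl⟩ := h; simp
  calc w.take k = (w.take u.length).take k := by rw [List.take_take, min_eq_left hk]
  _ = u.take k := by rw [h1]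

lemma prefix_getD {u w : List Bool} (h : u <+: w) {k : ℕ} (hk : k < u.length) :
    w.getD k false = u.getD k false := by
  rw [List.getD_eq_getElem u false hk,
    List.getD_eq_getElem w false (hk.trans_le h.length_le)]
  exact (h.getElem hk).symm

/-- the bits appended by ext are adversarial -/
lemma ext_adversarial (F : List Bool → ℝ) (p : List Bool) (n : ℕ) {k : ℕ}
    (hk1 : p.length ≤ k) (hk2 : k < p.length + n) :
    ((ext F p n).getD k false = true ↔ F ((ext F p n).take k) < 1/2) := by
  induction n with
  | zero => omega
  | succ n ih =>
    have hpre : ext F p n <+: ext F p (n+1) := ext_prefix F p (Nat.le_succ n)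
    rcases Nat.lt_or_ge k (p.length + n) with h' | h'
    · have hlen : k < (ext F p n).length := by rw [ext_length]; exact h'
      rw [prefix_getD hpre hlen, prefix_take hpre hlen.le]
      exact ih h'
    · have hk : k = (ext F p n).length := by rw [ext_length]; omega
      subst hk
      simp only [ext]
      rw [show (ext F p n ++ [decide (F (ext F p n) < 1/2)]).take (ext F p n).length
            = ext F p n by simp]
      simp


lemma discStr_bound (F : List Bool → ℝ) (hF : ∀ w, F w ∈ Set.Icc (0 : ℝ) 1)
    (v : List Bool) (k : ℕ) : -1 ≤ discStr F v k ∧ discStr F v k ≤ 1 := by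
  have h1 := (hF (v.take k)).1
  have h2 := (hF (v.take k)).2
  cases h : v.getD k false <;> simp only [discStr, fcStr, h] <;> norm_num <;>
    constructor <;> linarith


lemma mean_ge_quarter (A B : Finset ℕ) (d : ℕ → ℝ) (L : ℕ)
    (hdisj : Disjoint A B) (hA : ∀ k ∈ A, -1 ≤ d k) (hB : ∀ k ∈ B, 1/2 ≤ d k)
    (hAcard : A.card ≤ L) (hBcard : 5 * L + 1 ≤ B.card) :
    1/4 ≤ (∑ k ∈ A ∪ B, d k) / ((A ∪ B).card : ℝ) := by
  have hsum : ∑ k ∈ A ∪ B, d k = ∑ k ∈ A, d k + ∑ k ∈ B, d k := Finset.sum_union hdisj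
  have hcard : (A ∪ B).card = A.card + B.card := Finset.card_union_of_disjoint hdisj
  have hSA : -(A.card : ℝ) ≤ ∑ k ∈ A, d k := by
    have := Finset.card_nsmul_le_sum A d (-1) hA
    simpa [nsmul_eq_mul] using this
  have hSB : (B.card : ℝ) * (1/2) ≤ ∑ k ∈ B, d k := by
    have := Finset.card_nsmul_le_sum B d (1/2) hB
    simpa [nsmul_eq_mul, mul_comm] using this
  have hpos : (0:ℝ) < ((A ∪ B).card : ℝ) := by
    have : 0 < (A ∪ B).card := by omega
    exact_mod_cast this
  rw [le_div_iff₀ hpos]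
  have hc : ((A ∪ B).card : ℝ) = (A.card : ℝ) + (B.card : ℝ) := by exact_mod_cast hcard
  have h1 : (A.card : ℝ) ≤ (L : ℝ) := by exact_mod_cast hAcard
  have h2 : 5 * (L : ℝ) + 1 ≤ (B.card : ℝ) := by exact_mod_cast hBcard
  rw [hsum, hc]
  linarith

lemma mean_le_neg_quarter (A B : Finset ℕ) (d : ℕ → ℝ) (L : ℕ)
    (hdisj : Disjoint A B) (hA : ∀ k ∈ A, d k ≤ 1) (hB : ∀ k ∈ B, d k ≤ -(1/2))
    (hAcard : A.card ≤ L) (hBcard : 5 * L + 1 ≤ B.card) :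
    (∑ k ∈ A ∪ B, d k) / ((A ∪ B).card : ℝ) ≤ -(1/4) := by
  have h := mean_ge_quarter A B (fun k => -(d k)) L hdisj
    (fun k hk => by show -1 ≤ -d k; linarith [hA k hk]) (fun k hk => by show 1/2 ≤ -d k; linarith [hB k hk]) hAcard hBcard
  simp only [Finset.sum_neg_distrib, neg_div] at h
  linarith

open Classical in
lemma key (F : List Bool → ℝ) (hF : ∀ w, F w ∈ Set.Icc (0 : ℝ) 1) (p : List Bool) :
    (5 * p.length + 1 ≤ ((Finset.Ico p.length (ext F p (10 * p.length + 2)).length).filter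
          (fun k => fcStr F (ext F p (10 * p.length + 2)) k < 1/2)).card
        ∧ 1/4 ≤ meanDiscStr F (ext F p (10 * p.length + 2))
            (fun k => fcStr F (ext F p (10 * p.length + 2)) k < 1/2))
  ∨ (5 * p.length + 1 ≤ ((Finset.Ico p.length (ext F p (10 * p.length + 2)).length).filter
          (fun k => 1/2 ≤ fcStr F (ext F p (10 * p.length + 2)) k)).card
        ∧ meanDiscStr F (ext F p (10 * p.length + 2))
            (fun k => 1/2 ≤ fcStr F (ext F p (10 * p.length + 2)) k) ≤ -(1/4)) := by
  set L := p.length with hL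
  set N := 10 * L + 2 with hN
  set v := ext F p N with hv
  have hvlen : v.length = L + N := ext_length F p N
  -- adversarial facts on new days
  have hadvlow : ∀ k ∈ Finset.Ico L (L + N), fcStr F v k < 1/2 → 1/2 ≤ discStr F v k := by
    intro k hk hlow
    rw [Finset.mem_Ico] at hk
    have := (ext_adversarial F p N hk.1 hk.2).mpr hlow
    simp only [discStr, show v.getD k false = true from this, if_true]
    have : fcStr F v k < 1/2 := hlow
    linarith
  have hadvhigh : ∀ k ∈ Finset.Ico L (L + N), 1/2 ≤ fcStr F v k →
      discStr F v k ≤ -(1/2) := by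
    intro k hk hhigh
    rw [Finset.mem_Ico] at hk
    have hb : v.getD k false = false := by
      cases hx : v.getD k false
      · rfl
      · exact absurd ((ext_adversarial F p N hk.1 hk.2).mp hx) (not_lt.mpr hhigh)
    simp only [discStr, hb]
    norm_num
    linarith
  -- split range
  have hsplit : Finset.range v.length = Finset.range L ∪ Finset.Ico L (L + N) := by
    rw [hvlen, Finset.range_eq_Ico, Finset.range_eq_Ico]
    exact (Finset.Ico_union_Ico_eq_Ico (Nat.zero_le L) (Nat.le_add_right L N)).symm
  have hdisj : Disjoint (Finset.range L) (Finset.Ico L (L + N)) := by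
    rw [Finset.range_eq_Ico]
    exact Finset.Ico_disjoint_Ico_consecutive 0 L (L + N)
  -- pigeonhole on new days
  have hcard : ((Finset.Ico L (L + N)).filter (fun k => fcStr F v k < 1/2)).card
      + ((Finset.Ico L (L + N)).filter (fun k => 1/2 ≤ fcStr F v k)).card = N := by
    have h1 : ((Finset.Ico L (L + N)).filter (fun k => 1/2 ≤ fcStr F v k))
        = ((Finset.Ico L (L + N)).filter (fun k => ¬ (fcStr F v k < 1/2))) := by
      apply Finset.filter_congr
      intro k _
      simp [not_lt]
    rw [h1, Finset.card_filter_add_card_filter_not, Nat.card_Ico]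
    omega
  have hAcardlow : ((Finset.range L).filter (fun k => fcStr F v k < 1/2)).card ≤ L := by
    exact le_trans (Finset.card_filter_le _ _) (by simp)
  have hAcardhigh : ((Finset.range L).filter (fun k => 1/2 ≤ fcStr F v k)).card ≤ L := by
    exact le_trans (Finset.card_filter_le _ _) (by simp)
  have hdisjlow : Disjoint ((Finset.range L).filter (fun k => fcStr F v k < 1/2))
      ((Finset.Ico L (L + N)).filter (fun k => fcStr F v k < 1/2)) :=
    hdisj.mono (Finset.filter_subset _ _) (Finset.filter_subset _ _)
  have hdisjhigh : Disjoint ((Finset.range L).filter (fun k => 1/2 ≤ fcStr F v k))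
      ((Finset.Ico L (L + N)).filter (fun k => 1/2 ≤ fcStr F v k)) :=
    hdisj.mono (Finset.filter_subset _ _) (Finset.filter_subset _ _)
  rcases (by omega : 5 * L + 1 ≤ ((Finset.Ico L (L + N)).filter
        (fun k => fcStr F v k < 1/2)).card
      ∨ 5 * L + 1 ≤ ((Finset.Ico L (L + N)).filter (fun k => 1/2 ≤ fcStr F v k)).card)
      with hlo | hhi
  · left
    constructor
    · rw [hvlen]; exact hlo
    · rw [meanDiscStr, hsplit, Finset.filter_union]
      refine mean_ge_quarter _ _ _ L hdisjlow ?_ ?_ hAcardlow hlo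
      · exact fun k _ => (discStr_bound F hF v k).1
      · intro k hk
        rw [Finset.mem_filter] at hk
        exact hadvlow k hk.1 hk.2
  · right
    constructor
    · rw [hvlen]; exact hhi
    · rw [meanDiscStr, hsplit, Finset.filter_union]
      refine mean_le_neg_quarter _ _ _ L hdisjhigh ?_ ?_ hAcardhigh hhi
      · exact fun k _ => (discStr_bound F hF v k).2
      · intro k hk
        rw [Finset.mem_filter] at hk
        exact hadvhigh k hk.1 hk.2


noncomputable def sig (F : List Bool → ℝ) (p : List Bool) : List Bool :=
  (ext F p (10 * p.length + 2)).drop p.length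

lemma sig_append (F : List Bool → ℝ) (p : List Bool) :
    p ++ sig F p = ext F p (10 * p.length + 2) := by
  have h : p <+: ext F p (10 * p.length + 2) := ext_prefix F p (Nat.zero_le _)
  obtain ⟨t, ht⟩ := h
  rw [sig, ← ht]
  simp

lemma sig_length (F : List Bool → ℝ) (p : List Bool) :
    (sig F p).length = 10 * p.length + 2 := by
  have := congrArg List.length (sig_append F p)
  rw [List.length_append, ext_length] at this
  omega

lemma take_eq_ofFn {v : List Bool} {a : ℕ → Bool}
    (hag : ∀ k < v.length, v.getD k false = a k) {k : ℕ} (hk : k ≤ v.length) :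
    v.take k = List.ofFn (fun i : Fin k => a i) := by
  apply List.ext_getElem
  · simp [hk]
  · intro i h1 h2
    have hik : i < k := by simp at h1; omega
    have hiv : i < v.length := lt_of_lt_of_le hik hk
    rw [List.getElem_take]
    rw [List.getElem_ofFn]
    rw [← hag i hiv, List.getD_eq_getElem v false hiv]

lemma fcStr_eq_fc (F : List Bool → ℝ) {v : List Bool} {a : ℕ → Bool}
    (hag : ∀ k < v.length, v.getD k false = a k) {k : ℕ} (hk : k ≤ v.length) :
    fcStr F v k = fc F a k := by
  rw [fcStr, fc, take_eq_ofFn hag hk]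

lemma discStr_eq_disc (F : List Bool → ℝ) {v : List Bool} {a : ℕ → Bool}
    (hag : ∀ k < v.length, v.getD k false = a k) {k : ℕ} (hk : k < v.length) :
    discStr F v k = disc F a k := by
  rw [discStr, disc, hag k hk, fcStr_eq_fc F hag hk.le]

open Classical in
lemma mean_eq_avg (F : List Bool → ℝ) {v : List Bool} {a : ℕ → Bool}
    (hag : ∀ k < v.length, v.getD k false = a k) (P Q : ℕ → Prop)
    (hPQ : ∀ k < v.length, (P k ↔ Q k)) :
    meanDiscStr F v P = avgDisc F a Q v.length := by
  rw [meanDiscStr, avgDisc]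
  have hfe : (Finset.range v.length).filter P = (Finset.range v.length).filter Q := by
    apply Finset.filter_congr
    intro k hk
    exact hPQ k (Finset.mem_range.mp hk)
  rw [hfe]
  congr 1
  apply Finset.sum_congr rfl
  intro k hk
  rw [Finset.mem_filter, Finset.mem_range] at hk
  exact discStr_eq_disc F hag hk.1

lemma refute (S : Set ℕ) (u : ℕ → ℝ)
    (h1 : ∀ m, ∃ k ∈ S, m ≤ k)
    (h2 : ∀ m, ∃ j, m ≤ j ∧ 1/4 ≤ |u j|) :
    ¬ (S.Finite ∨ Tendsto u atTop (𝓝 0)) := by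
  rintro (hfin | htend)
  · obtain ⟨b, hb⟩ := hfin.bddAbove
    obtain ⟨k, hk, hbk⟩ := h1 (b + 1)
    have := hb hk
    omega
  · have h3 : ∀ᶠ j in atTop, |u j| < 1/4 := by
      have habs : Tendsto (fun j => |u j|) atTop (𝓝 0) := by
        simpa using htend.abs
      exact habs.eventually_lt_const (by norm_num)
    obtain ⟨M, hM⟩ := eventually_atTop.mp h3
    obtain ⟨j, hj, hj4⟩ := h2 M
    exact absurd (hM j hj) (not_lt.mpr hj4)

open Classical in
theorem player_two_adversarial_strategy_wins
    (F : List Bool → ℝ) (hF : ∀ w, F w ∈ Set.Icc (0 : ℝ) 1) :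
    ∃ σ : List Bool → List Bool,
      (∀ p, σ p ≠ []) ∧
      (∀ p k, p.length ≤ k → k < (p ++ σ p).length →
        ((p ++ σ p).getD k false = true ↔ fcStr F (p ++ σ p) k < 1/2)) ∧
      (∀ p,
        (((Finset.range (p ++ σ p).length).filter
              (fun k => fcStr F (p ++ σ p) k < 1/2)).Nonempty ∧
            1/4 ≤ meanDiscStr F (p ++ σ p) (fun k => fcStr F (p ++ σ p) k < 1/2)) ∨
        (((Finset.range (p ++ σ p).length).filter
              (fun k => 1/2 ≤ fcStr F (p ++ σ p) k)).Nonempty ∧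
            meanDiscStr F (p ++ σ p) (fun k => 1/2 ≤ fcStr F (p ++ σ p) k) ≤ -(1/4))) ∧
      (∀ f a, IsLimit σ f a → a ∉ {b : ℕ → Bool | HighLowCalibrated F b}) := by
  refine ⟨sig F, ?_, ?_, ?_, ?_⟩
  · intro p h
    have := sig_length F p
    rw [h] at this
    simp at this
  · intro p k hk1 hk2
    rw [sig_append] at hk2 ⊢
    rw [ext_length] at hk2
    exact ext_adversarial F p _ hk1 hk2
  · intro p
    rw [sig_append]
    rcases key F hF p with ⟨hc, hm⟩ | ⟨hc, hm⟩
    · left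
      refine ⟨?_, hm⟩
      obtain ⟨k, hkmem⟩ := Finset.card_pos.mp (Nat.lt_of_lt_of_le (Nat.zero_lt_succ _) hc)
      rw [Finset.mem_filter, Finset.mem_Ico] at hkmem
      exact ⟨k, Finset.mem_filter.mpr ⟨Finset.mem_range.mpr hkmem.1.2, hkmem.2⟩⟩
    · right
      refine ⟨?_, hm⟩
      obtain ⟨k, hkmem⟩ := Finset.card_pos.mp (Nat.lt_of_lt_of_le (Nat.zero_lt_succ _) hc)
      rw [Finset.mem_filter, Finset.mem_Ico] at hkmem
      exact ⟨k, Finset.mem_filter.mpr ⟨Finset.mem_range.mpr hkmem.1.2, hkmem.2⟩⟩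
  · intro f a hlim hcal
    set w := posSeq (sig F) f with hw
    have hwlen : ∀ n, n ≤ (w n).length := by
      intro n
      induction n with
      | zero => exact Nat.zero_le _
      | succ n ih =>
        have h1 : (w (n+1)).length
            = (w n).length + (sig F (w n)).length + (f (n+1)).length := by
          show ((w n ++ sig F (w n)) ++ f (n+1)).length = _
          simp [Nat.add_assoc]
        rw [h1, sig_length]
        omega
    have hvlen : ∀ n, (w n).length ≤ (w n ++ sig F (w n)).length := by
      intro n; simp
    have hagree : ∀ n k, k < (w n ++ sig F (w n)).length →
        (w n ++ sig F (w n)).getD k false = a k := by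
      intro n k hk
      have hpre : (w n ++ sig F (w n)) <+: w (n+1) := ⟨f (n+1), rfl⟩
      rw [← prefix_getD hpre hk]
      exact hlim (n+1) k (lt_of_lt_of_le hk hpre.length_le)
    have hkey : ∀ n,
        ((∃ k, (w n).length ≤ k ∧ fc F a k < 1/2) ∧
          1/4 ≤ avgDisc F a (fun k => fc F a k < 1/2) (w n ++ sig F (w n)).length)
      ∨ ((∃ k, (w n).length ≤ k ∧ 1/2 ≤ fc F a k) ∧
          avgDisc F a (fun k => 1/2 ≤ fc F a k) (w n ++ sig F (w n)).length ≤ -(1/4)) := by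
      intro n
      have hv : w n ++ sig F (w n) = ext F (w n) (10 * (w n).length + 2) :=
        sig_append F (w n)
      have hag : ∀ k < (w n ++ sig F (w n)).length,
          (w n ++ sig F (w n)).getD k false = a k := hagree n
      have hfc : ∀ k, k ≤ (w n ++ sig F (w n)).length →
          fcStr F (w n ++ sig F (w n)) k = fc F a k :=
        fun k hk => fcStr_eq_fc F hag hk
      rcases key F hF (w n) with ⟨hc, hm⟩ | ⟨hc, hm⟩
      · left
        rw [← hv] at hc hm
        constructor
        · obtain ⟨k, hkmem⟩ := Finset.card_pos.mp (Nat.lt_of_lt_of_le (Nat.zero_lt_succ _) hc)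
          rw [Finset.mem_filter, Finset.mem_Ico] at hkmem
          refine ⟨k, hkmem.1.1, ?_⟩
          rw [← hfc k (le_of_lt hkmem.1.2)]
          exact hkmem.2
        · rw [← mean_eq_avg F hag
              (fun k => fcStr F (w n ++ sig F (w n)) k < 1/2)
              (fun k => fc F a k < 1/2)
              (fun k hk => by simp only [hfc k hk.le])]
          exact hm
      · right
        rw [← hv] at hc hm
        constructor
        · obtain ⟨k, hkmem⟩ := Finset.card_pos.mp (Nat.lt_of_lt_of_le (Nat.zero_lt_succ _) hc)
          rw [Finset.mem_filter, Finset.mem_Ico] at hkmem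
          refine ⟨k, hkmem.1.1, ?_⟩
          rw [← hfc k (le_of_lt hkmem.1.2)]
          exact hkmem.2
        · rw [← mean_eq_avg F hag
              (fun k => 1/2 ≤ fcStr F (w n ++ sig F (w n)) k)
              (fun k => 1/2 ≤ fc F a k)
              (fun k hk => by simp only [hfc k hk.le])]
          exact hm
    obtain ⟨hcalhigh, hcallow⟩ := hcal
    have hdicho : (∀ m, ∃ n, m ≤ n ∧
        ((∃ k, (w n).length ≤ k ∧ fc F a k < 1/2) ∧
          1/4 ≤ avgDisc F a (fun k => fc F a k < 1/2) (w n ++ sig F (w n)).length))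
      ∨ (∀ m, ∃ n, m ≤ n ∧
        ((∃ k, (w n).length ≤ k ∧ 1/2 ≤ fc F a k) ∧
          avgDisc F a (fun k => 1/2 ≤ fc F a k) (w n ++ sig F (w n)).length ≤ -(1/4))) := by
      by_cases h : ∀ m, ∃ n, m ≤ n ∧
        ((∃ k, (w n).length ≤ k ∧ fc F a k < 1/2) ∧
          1/4 ≤ avgDisc F a (fun k => fc F a k < 1/2) (w n ++ sig F (w n)).length)
      · exact Or.inl h
      · right
        push_neg at h
        obtain ⟨m0, hm0⟩ := h
        intro m
        refine ⟨max m0 m, le_max_right _ _, ?_⟩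
        rcases hkey (max m0 m) with hl | hh
        · exact absurd hl.2 (not_le.mpr (hm0 (max m0 m) (le_max_left m0 m) hl.1))
        · exact hh
    rcases hdicho with h | h
    · refine refute {k | fc F a k < 1/2}
        (avgDisc F a (fun k => fc F a k < 1/2)) ?_ ?_ hcallow
      · intro m
        obtain ⟨n, hn, ⟨k, hk1, hk2⟩, _⟩ := h m
        exact ⟨k, hk2, le_trans hn (le_trans (hwlen n) hk1)⟩
      · intro m
        obtain ⟨n, hn, _, hm⟩ := h m
        refine ⟨(w n ++ sig F (w n)).length,
          le_trans hn (le_trans (hwlen n) (hvlen n)), ?_⟩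
        exact le_trans hm (le_abs_self _)
    · refine refute {k | 1/2 ≤ fc F a k}
        (avgDisc F a (fun k => 1/2 ≤ fc F a k)) ?_ ?_ hcalhigh
      · intro m
        obtain ⟨n, hn, ⟨k, hk1, hk2⟩, _⟩ := h m
        exact ⟨k, hk2, le_trans hn (le_trans (hwlen n) hk1)⟩
      · intro m
        obtain ⟨n, hn, _, hm⟩ := h m
        refine ⟨(w n ++ sig F (w n)).length,
          le_trans hn (le_trans (hwlen n) (hvlen n)), ?_⟩
        refine le_trans ?_ (neg_le_abs _)
        linarith
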